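/- arXiv:1011.4961 — 4 statements merged into one kernel-verified Lean document; each statement's English description precedes it below -/
import Mathlib

section
/- A real symmetric 4×4 matrix S has its eigenvalue multiset invariant under negation if and only if trace(S) = 0 and trace(S³) = 0. -/
open Matrix

lemma trace_pow_eq (S : Matrix (Fin 4) (Fin 4) ℝ) (hS : S.IsHermitian) (k : ℕ) :
    (S ^ k).trace = ∑ i, hS.eigenvalues i ^ k := by
  set U : Matrix (Fin 4) (Fin 4) ℝ := (hS.eigenvectorUnitary : Matrix (Fin 4) (Fin 4) ℝ) with hU
  have hUU : star U * U = 1 := Unitary.coe_star_mul_self _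
  have hpow : S ^ k = U * (diagonal (RCLike.ofReal ∘ hS.eigenvalues)) ^ k * star U := by
    induction k with
    | zero => simp; exact (Unitary.coe_mul_star_self hS.eigenvectorUnitary).symm
    | succ n ih =>
      rw [pow_succ, ih]
      nth_rewrite 2 [hS.spectral_theorem]
      rw [Unitary.conjStarAlgAut_apply, ← hU, pow_succ]
      simp only [mul_assoc]
      rw [← mul_assoc (star U) U, hUU, one_mul]
  rw [hpow, trace_mul_cycle, hUU, one_mul, diagonal_pow, trace_diagonal]
  simp [RCLike.ofReal]

/-- A real symmetric 4×4 matrix has negation-invariant eigenvalue multiset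
iff trace S = 0 and trace S³ = 0. -/
theorem stmt1 (S : Matrix (Fin 4) (Fin 4) ℝ) (hS : S.IsHermitian) :
    ((Finset.univ.val.map hS.eigenvalues).map (fun μ => -μ) =
      Finset.univ.val.map hS.eigenvalues) ↔
    (S.trace = 0 ∧ (S ^ 3).trace = 0) := by
  set a := hS.eigenvalues with ha
  have htr1 : S.trace = ∑ i, a i := by
    have := trace_pow_eq S hS 1; simpa using this
  have htr3 : (S ^ 3).trace = ∑ i, a i ^ 3 := trace_pow_eq S hS 3
  set M : Multiset ℝ := Finset.univ.val.map a with hMdef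
  have hsum : M.sum = ∑ i, a i := (Finset.sum_eq_multiset_sum _ _).symm
  have hM : M = a 0 ::ₘ a 1 ::ₘ a 2 ::ₘ a 3 ::ₘ 0 := rfl
  constructor
  · intro h
    have h1 : M.sum = 0 := by
      have := congrArg Multiset.sum h
      rw [Multiset.sum_map_neg'] at this
      linarith
    have h' := h
    rw [hM] at h'
    simp only [Multiset.map_cons, Multiset.map_zero] at h'
    have hc := congrArg (fun N : Multiset ℝ => (N.map (fun x : ℝ => x ^ 3)).sum) h'
    simp only [Multiset.map_cons, Multiset.map_zero, Multiset.sum_cons, Multiset.sum_zero] at hc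
    constructor
    · rw [htr1, ← hsum, h1]
    · rw [htr3, Fin.sum_univ_four]
      nlinarith [hc, sq_nonneg (a 0), sq_nonneg (a 1)]
  · rintro ⟨h1, h3⟩
    rw [htr1, Fin.sum_univ_four] at h1
    rw [htr3, Fin.sum_univ_four] at h3
    have key : (a 0 + a 1) * (a 0 + a 2) * (a 1 + a 2) = 0 := by
      linear_combination (1/3 * ((a 0 + a 1 + a 2 + a 3)^2 - 3*(a 0 + a 1 + a 2 + a 3)*a 3 + 3*(a 3)^2)) * h1 - (1/3) * h3
    rw [hM]
    simp only [Multiset.map_cons, Multiset.map_zero]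
    rcases mul_eq_zero.1 key with h | h
    · rcases mul_eq_zero.1 h with h' | h'
      · have e2 : a 1 = -a 0 := by linarith
        have e4 : a 3 = -a 2 := by linarith
        rw [e2, e4]
        simp only [neg_neg, ← Multiset.singleton_add]
        abel
      · have e2 : a 2 = -a 0 := by linarith
        have e4 : a 3 = -a 1 := by linarith
        rw [e2, e4]
        simp only [neg_neg, ← Multiset.singleton_add]
        abel
    · have e2 : a 2 = -a 1 := by linarith
      have e4 : a 3 = -a 0 := by linarith
      rw [e2, e4]
      simp only [neg_neg, ← Multiset.singleton_add]
      abel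
end

section
/- Let S(x₁,x₂,x₃) be the 4×4 symmetric matrix [[0,x₁,x₂,x₃],[x₁,0,λ₃x₃,λ₂x₂],[x₂,λ₃x₃,0,λ₁x₁],[x₃,λ₂x₂,λ₁x₁,0]] depending on fixed real parameters λ₁,λ₂,λ₃. Then trace(S³) = 6·x₁x₂x₃·(λ₁λ₂λ₃ + λ₁ + λ₂ + λ₃). Consequently the eigenvalues of S(x₁,x₂,x₃) are symmetrically arranged around zero for all (x₁,x₂,x₃) ∈ ℝ³ if and only if λ₁λ₂λ₃ + λ₁ + λ₂ + λ₃ = 0. -/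
open Matrix Polynomial

/-- The general element of Bryant's Type C austere subspace. -/
def SC (l1 l2 l3 x1 x2 x3 : ℝ) : Matrix (Fin 4) (Fin 4) ℝ :=
  !![0,  x1,      x2,      x3;
     x1, 0,       l3 * x3, l2 * x2;
     x2, l3 * x3, 0,       l1 * x1;
     x3, l2 * x2, l1 * x1, 0]

lemma SC_trace_cube (l1 l2 l3 x1 x2 x3 : ℝ) :
    ((SC l1 l2 l3 x1 x2 x3) ^ 3).trace
      = 6 * (x1 * x2 * x3) * (l1 * l2 * l3 + l1 + l2 + l3) := by
  show ((SC l1 l2 l3 x1 x2 x3) ^ 3).trace = _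
  rw [pow_succ, pow_succ, pow_one]
  simp only [Matrix.trace, Matrix.diag, Fin.sum_univ_four, Matrix.mul_apply, SC]
  simp only [Matrix.of_apply, Matrix.cons_val]
  norm_num [Fin.sum_univ_four]
  ring

lemma det_fin_four' {R : Type*} [CommRing R] (M : Matrix (Fin 4) (Fin 4) R) :
    M.det = M 0 0 * (M 1 1 * (M 2 2 * M 3 3 - M 2 3 * M 3 2) - M 1 2 * (M 2 1 * M 3 3 - M 2 3 * M 3 1)
        + M 1 3 * (M 2 1 * M 3 2 - M 2 2 * M 3 1))
      - M 0 1 * (M 1 0 * (M 2 2 * M 3 3 - M 2 3 * M 3 2) - M 1 2 * (M 2 0 * M 3 3 - M 2 3 * M 3 0)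
        + M 1 3 * (M 2 0 * M 3 2 - M 2 2 * M 3 0))
      + M 0 2 * (M 1 0 * (M 2 1 * M 3 3 - M 2 3 * M 3 1) - M 1 1 * (M 2 0 * M 3 3 - M 2 3 * M 3 0)
        + M 1 3 * (M 2 0 * M 3 1 - M 2 1 * M 3 0))
      - M 0 3 * (M 1 0 * (M 2 1 * M 3 2 - M 2 2 * M 3 1) - M 1 1 * (M 2 0 * M 3 2 - M 2 2 * M 3 0)
        + M 1 2 * (M 2 0 * M 3 1 - M 2 1 * M 3 0)) := by
  rw [Matrix.det_succ_row_zero, Fin.sum_univ_four]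
  simp (config := { decide := true }) [Matrix.det_fin_three, Matrix.submatrix_apply, Fin.succAbove, Fin.lt_def,
    show (Fin.succ 2 : Fin 4) = 3 from rfl, show (Fin.castSucc 2 : Fin 4) = 2 from rfl]
  ring

set_option maxHeartbeats 1000000 in
lemma SC_charpoly (l1 l2 l3 x1 x2 x3 : ℝ) :
    (SC l1 l2 l3 x1 x2 x3).charpoly =
      X ^ 4
      + C (-(x1^2 + x2^2 + x3^2 + l1^2*x1^2 + l2^2*x2^2 + l3^2*x3^2)) * X ^ 2
      + C (-2 * (x1*x2*x3) * (l1*l2*l3 + l1 + l2 + l3)) * X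
      + C (l1^2*x1^4 + l2^2*x2^4 + l3^2*x3^4
            - 2*l1*l2*x1^2*x2^2 - 2*l1*l3*x1^2*x3^2 - 2*l2*l3*x2^2*x3^2) := by
  rw [Matrix.charpoly, det_fin_four']
  simp (config := { decide := true }) only [charmatrix_apply, SC, Matrix.diagonal_apply, Matrix.cons_val', Matrix.cons_val_zero,
    Matrix.cons_val_one, Matrix.head_cons, Matrix.head_fin_const, Matrix.empty_val',
    Matrix.cons_val_fin_one, Matrix.of_apply, Matrix.cons_val]
  norm_num
  simp only [_root_.map_mul, _root_.map_add, _root_.map_sub, map_neg, map_pow, map_ofNat,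
    _root_.map_one, _root_.map_zero]
  ring

lemma dvd_comp {R : Type*} [CommSemiring R] {u q r : R[X]} (h : u ∣ q) :
    u.comp r ∣ q.comp r := by
  obtain ⟨w, rfl⟩ := h
  exact ⟨w.comp r, by rw [mul_comp]⟩

lemma comp_neg_comp_neg (p : ℝ[X]) : (p.comp (-X)).comp (-X) = p := by
  rw [Polynomial.comp_assoc]
  simp

lemma rootMultiplicity_comp_neg (p : ℝ[X]) (hp : p ≠ 0) (a : ℝ) :
    rootMultiplicity a (p.comp (-X)) = rootMultiplicity (-a) p := by
  have hpc : p.comp (-X) ≠ 0 := by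
    intro h
    have := comp_neg_comp_neg p
    rw [h] at this
    simp at this
    exact hp this.symm
  have key : ∀ (q : ℝ[X]) (b : ℝ) (n : ℕ), (X - C b) ^ n ∣ q.comp (-X) →
      (X - C (-b)) ^ n ∣ q := by
    intro q b n h
    have h2 := dvd_comp (r := (-X : ℝ[X])) h
    rw [comp_neg_comp_neg] at h2
    have h3 : ((X - C b) ^ n).comp (-X) = (-1) ^ n * (X - C (-b)) ^ n := by
      rw [pow_comp, sub_comp, X_comp, C_comp]
      rw [show (-X - C b : ℝ[X]) = (-1) * (X - C (-b)) by rw [map_neg]; ring]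
      rw [mul_pow]
    rw [h3] at h2
    exact dvd_trans (Dvd.intro_left _ rfl) h2
  apply le_antisymm
  · rw [Polynomial.le_rootMultiplicity_iff hp]
    exact key p a _ (Polynomial.pow_rootMultiplicity_dvd _ _)
  · rw [Polynomial.le_rootMultiplicity_iff hpc]
    have := key (p.comp (-X)) (-a) (rootMultiplicity (-a) p)
    rw [comp_neg_comp_neg, neg_neg] at this
    exact this (Polynomial.pow_rootMultiplicity_dvd _ _)

lemma roots_comp_neg (p : ℝ[X]) (hp : p ≠ 0) :
    (p.comp (-X)).roots = p.roots.map (fun t => -t) := by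
  have hpc : p.comp (-X) ≠ 0 := by
    intro h
    have := comp_neg_comp_neg p
    rw [h] at this
    simp at this
    exact hp this.symm
  ext a
  rw [Polynomial.count_roots, rootMultiplicity_comp_neg p hp a]
  have : a = -(-a) := by ring
  rw [this, Multiset.count_map_eq_count' _ _ neg_injective, Polynomial.count_roots, neg_neg]

lemma charpoly_conj_eq {n : Type*} [DecidableEq n] [Fintype n] {R : Type*} [CommRing R]
    (P M Q : Matrix n n R) (hPQ : P * Q = 1) :
    (P * M * Q).charpoly = M.charpoly := by
  have key : charmatrix (P * M * Q) = P.map C * charmatrix M * Q.map C := by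
    rw [charmatrix, charmatrix, mul_sub, sub_mul]
    congr 1
    · have hc : Commute ((Matrix.scalar n) (X : R[X])) (P.map C) :=
        (Matrix.scalar_commute (X : R[X]) (Commute.all X) (P.map C))
      rw [← hc.eq, mul_assoc, ← Matrix.map_mul, hPQ]
      simp
    · simp only [RingHom.mapMatrix_apply]
      rw [← Matrix.map_mul, ← Matrix.map_mul]
  rw [Matrix.charpoly, Matrix.charpoly, key, Matrix.det_mul, Matrix.det_mul]
  have : (P.map (C : R →+* R[X])).det * (Q.map C).det = 1 := by
    rw [← Matrix.det_mul, ← Matrix.map_mul, hPQ]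
    simp
  rw [mul_comm, ← mul_assoc, mul_comm ((Q.map C).det), this, one_mul]

lemma charpoly_diagonal {n : Type*} [DecidableEq n] [Fintype n] {R : Type*} [CommRing R]
    (d : n → R) : (Matrix.diagonal d).charpoly = ∏ i, (X - C (d i)) := by
  have : charmatrix (Matrix.diagonal d) = Matrix.diagonal (fun i => X - C (d i)) := by
    ext i j
    by_cases h : i = j
    · subst h; simp [charmatrix_apply]
    · simp [charmatrix_apply, Matrix.diagonal_apply_ne _ h]
  rw [Matrix.charpoly, this, Matrix.det_diagonal]

lemma charpoly_splits_of_isHermitian {n : Type*} [DecidableEq n] [Fintype n]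
    {A : Matrix n n ℝ} (hA : A.IsHermitian) :
    A.charpoly.Splits := by
  have hsp := hA.spectral_theorem
  have hV : (hA.eigenvectorUnitary : Matrix n n ℝ) * star (hA.eigenvectorUnitary : Matrix n n ℝ) = 1 :=
    (Matrix.mem_unitaryGroup_iff).mp hA.eigenvectorUnitary.2
  rw [show A.charpoly = (Matrix.diagonal (RCLike.ofReal ∘ hA.eigenvalues)).charpoly by
        conv_lhs => rw [hsp]
        exact charpoly_conj_eq _ _ _ hV]
  rw [_root_.charpoly_diagonal]
  exact Polynomial.Splits.prod (fun i _ => Polynomial.Splits.X_sub_C _)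

lemma comp_neg_of_symm_roots {p : ℝ[X]} (hm : p.Monic)
    (hsp : p.Splits) (heven : Even p.natDegree)
    (hsym : p.roots.map (fun t => -t) = p.roots) :
    p.comp (-X) = p := by
  have hprod := hsp.eq_prod_roots_of_monic hm
  have hcard : Multiset.card p.roots = p.natDegree :=
    (Polynomial.splits_iff_card_roots).mp hsp
  conv_lhs => rw [hprod]
  have : ((p.roots.map fun a => X - C a).prod).comp (-X)
      = ((p.roots.map fun a => X - C a).map (Polynomial.eval₂RingHom C (-X : ℝ[X]))).prod := by
    rw [← map_multiset_prod]
    rfl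
  rw [this, Multiset.map_map]
  have hfun : ((fun p : ℝ[X] => Polynomial.eval₂RingHom C (-X : ℝ[X]) p) ∘ fun a : ℝ => X - C a)
      = (fun a : ℝ => -(X - C (-a))) := by
    funext a
    show (X - C a).comp (-X) = _
    rw [sub_comp, X_comp, C_comp, map_neg]
    ring
  rw [hfun]
  have : (p.roots.map fun a : ℝ => -(X - C (-a)))
      = (p.roots.map fun a : ℝ => X - C (-a)).map Neg.neg := by
    rw [Multiset.map_map]; rfl
  rw [this, Multiset.prod_map_neg, Multiset.card_map, hcard]
  have : (p.roots.map fun a : ℝ => X - C (-a))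
      = (p.roots.map (fun t => -t)).map fun a : ℝ => X - C a := by
    rw [Multiset.map_map]; rfl
  rw [this, hsym, Even.neg_one_pow heven, one_mul, ← hprod]

lemma SC_isHermitian (l1 l2 l3 x1 x2 x3 : ℝ) : (SC l1 l2 l3 x1 x2 x3).IsHermitian := by
  show (SC l1 l2 l3 x1 x2 x3)ᴴ = SC l1 l2 l3 x1 x2 x3
  ext i j
  fin_cases i <;> fin_cases j <;> simp [SC, Matrix.conjTranspose_apply]

/-- trace(S³) = 6·x₁x₂x₃·(λ₁λ₂λ₃+λ₁+λ₂+λ₃), and the eigenvalues of S are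
symmetric about zero for all x iff λ₁λ₂λ₃+λ₁+λ₂+λ₃ = 0. -/
theorem stmt7 (l1 l2 l3 : ℝ) :
    (∀ x1 x2 x3 : ℝ, ((SC l1 l2 l3 x1 x2 x3) ^ 3).trace
        = 6 * (x1 * x2 * x3) * (l1 * l2 * l3 + l1 + l2 + l3)) ∧
    ((∀ x1 x2 x3 : ℝ,
        (SC l1 l2 l3 x1 x2 x3).charpoly.roots.map (fun t => -t)
          = (SC l1 l2 l3 x1 x2 x3).charpoly.roots)
      ↔ l1 * l2 * l3 + l1 + l2 + l3 = 0) := by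
  constructor
  · exact fun x1 x2 x3 => SC_trace_cube l1 l2 l3 x1 x2 x3
  constructor
  · -- symmetry for all x ⇒ K = 0
    intro h
    have hsym := h 1 1 1
    set A := SC l1 l2 l3 1 1 1 with hA
    have hherm := SC_isHermitian l1 l2 l3 1 1 1
    have hsp := charpoly_splits_of_isHermitian hherm
    have hmon := A.charpoly_monic
    have hdeg : A.charpoly.natDegree = 4 := by
      rw [Matrix.charpoly_natDegree_eq_dim]
      simp
    have hcomp := comp_neg_of_symm_roots hmon hsp (by rw [hdeg]; exact ⟨2, rfl⟩) hsym
    rw [SC_charpoly] at hcomp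
    have h1 := congrArg (fun q : ℝ[X] => q.coeff 1) hcomp
    simp only [add_comp, mul_comp, pow_comp, X_comp, C_comp] at h1
    have hexp : ((-X : ℝ[X]) ^ 4) = X ^ 4 := by ring
    have hexp2 : ((-X : ℝ[X]) ^ 2) = X ^ 2 := by ring
    rw [hexp, hexp2] at h1
    simp only [Polynomial.coeff_add, Polynomial.coeff_C_mul, Polynomial.coeff_X_pow,
      Polynomial.coeff_C, mul_neg, Polynomial.coeff_neg, Polynomial.coeff_X] at h1
    norm_num at h1
    linarith
  · -- K = 0 ⇒ symmetry
    intro hK x1 x2 x3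
    have hne : (SC l1 l2 l3 x1 x2 x3).charpoly ≠ 0 :=
      (Matrix.charpoly_monic _).ne_zero
    have hcomp : (SC l1 l2 l3 x1 x2 x3).charpoly.comp (-X)
        = (SC l1 l2 l3 x1 x2 x3).charpoly := by
      rw [SC_charpoly, hK]
      simp only [add_comp, mul_comp, pow_comp, X_comp, C_comp, mul_zero, map_zero, zero_mul, zero_comp]
      ring
    have := roots_comp_neg _ hne
    rw [hcomp] at this
    exact this.symm
end

section
/- Let V be a 2-dimensional subspace of the space of 2×2 real matrices on which the determinant vanishes identically (every element of V is singular). Then either all matrices in V have a common nonzero vector in their kernel, or all matrices in V have a common nonzero vector in the kernel of their transposes (equivalently, their images lie in a common line). -/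
open Matrix

/-- A 2-dimensional subspace of singular 2×2 real matrices has either a common
kernel vector or a common cokernel vector. -/
theorem stmt13 (V : Submodule ℝ (Matrix (Fin 2) (Fin 2) ℝ))
    (hdim : Module.finrank ℝ V = 2)
    (hsing : ∀ B ∈ V, B.det = 0) :
    (∃ v : Fin 2 → ℝ, v ≠ 0 ∧ ∀ B ∈ V, B.mulVec v = 0) ∨
    (∃ v : Fin 2 → ℝ, v ≠ 0 ∧ ∀ B ∈ V, Bᵀ.mulVec v = 0) := by
  classical
  have b := Module.finBasisOfFinrankEq ℝ V hdim
  set B₁ : Matrix (Fin 2) (Fin 2) ℝ := ((b 0 : V) : Matrix (Fin 2) (Fin 2) ℝ) with hB₁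
  set B₂ : Matrix (Fin 2) (Fin 2) ℝ := ((b 1 : V) : Matrix (Fin 2) (Fin 2) ℝ) with hB₂
  have hB₁V : B₁ ∈ V := (b 0).2
  have hB₂V : B₂ ∈ V := (b 1).2
  -- every element of V is a combination of B₁, B₂
  have hrepr : ∀ B ∈ V, ∃ s t : ℝ, B = s • B₁ + t • B₂ := by
    intro B hB
    refine ⟨b.repr ⟨B, hB⟩ 0, b.repr ⟨B, hB⟩ 1, ?_⟩
    have := b.sum_repr ⟨B, hB⟩
    rw [Fin.sum_univ_two] at this
    have := congrArg (Submodule.subtype V) this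
    simpa using this.symm
  -- cokernel vectors
  obtain ⟨c₁, hc₁0, hc₁⟩ : ∃ v, v ≠ 0 ∧ B₁ᵀ *ᵥ v = 0 := by
    have : (B₁ᵀ).det = 0 := by rw [det_transpose]; exact hsing B₁ hB₁V
    obtain ⟨v, hv0, hv⟩ := (Matrix.exists_mulVec_eq_zero_iff.mpr this)
    exact ⟨v, hv0, hv⟩
  obtain ⟨c₂, hc₂0, hc₂⟩ : ∃ v, v ≠ 0 ∧ B₂ᵀ *ᵥ v = 0 := by
    have : (B₂ᵀ).det = 0 := by rw [det_transpose]; exact hsing B₂ hB₂V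
    obtain ⟨v, hv0, hv⟩ := (Matrix.exists_mulVec_eq_zero_iff.mpr this)
    exact ⟨v, hv0, hv⟩
  by_cases hD : c₁ 0 * c₂ 1 - c₁ 1 * c₂ 0 = 0
  · -- dependent: common cokernel vector c₁
    right
    have hc2ne : c₂ 0 ≠ 0 ∨ c₂ 1 ≠ 0 := by
      by_contra h
      push_neg at h
      exact hc₂0 (funext fun i => by fin_cases i <;> simp [h.1, h.2])
    set t : ℝ := if h : c₂ 0 ≠ 0 then c₁ 0 / c₂ 0 else c₁ 1 / c₂ 1 with ht
    have hc : c₁ = t • c₂ := by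
      funext i
      by_cases h0 : c₂ 0 ≠ 0
      · fin_cases i
        · simp only [ht, dif_pos h0, Pi.smul_apply, smul_eq_mul, Fin.zero_eta, Fin.mk_one]
          field_simp
        · simp only [ht, dif_pos h0, Pi.smul_apply, smul_eq_mul, Fin.zero_eta, Fin.mk_one]
          field_simp
          linarith [hD]
      · have h1 : c₂ 1 ≠ 0 := hc2ne.resolve_left h0
        push_neg at h0
        have hc10 : c₁ 0 = 0 := by
          have : c₁ 0 * c₂ 1 = 0 := by rw [h0] at hD; linarith
          exact (mul_eq_zero.mp this).resolve_right h1
        fin_cases i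
        · simp [ht, dif_neg (not_not.mpr h0), h0, hc10]
        · simp only [ht, dif_neg (not_not.mpr h0), Pi.smul_apply, smul_eq_mul, Fin.zero_eta, Fin.mk_one]
          field_simp
    have key : ∀ B ∈ V, Bᵀ *ᵥ c₁ = 0 := by
      intro B hB
      obtain ⟨s, u, rfl⟩ := hrepr B hB
      have h2 : B₂ᵀ *ᵥ c₁ = 0 := by
        rw [hc, mulVec_smul, hc₂, smul_zero]
      rw [transpose_add, transpose_smul, transpose_smul, add_mulVec,
        smul_mulVec, smul_mulVec, hc₁, h2, smul_zero, smul_zero, add_zero]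
    exact ⟨c₁, hc₁0, key⟩
  · -- independent: common kernel vector
    left
    have hsum : (B₁ + B₂).det = 0 := hsing _ (V.add_mem hB₁V hB₂V)
    obtain ⟨w, hw0, hw⟩ := Matrix.exists_mulVec_eq_zero_iff.mpr hsum
    have hadd : B₁ *ᵥ w + B₂ *ᵥ w = 0 := by rw [← add_mulVec, hw]
    set y := B₁ *ᵥ w with hy
    have hdot1 : c₁ ⬝ᵥ y = 0 := by
      rw [hy, dotProduct_mulVec, ← mulVec_transpose, hc₁, zero_dotProduct]
    have hdot2 : c₂ ⬝ᵥ y = 0 := by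
      have hyneg : y = -(B₂ *ᵥ w) := eq_neg_of_add_eq_zero_left hadd
      rw [hyneg, dotProduct_neg, dotProduct_mulVec, ← mulVec_transpose, hc₂,
        zero_dotProduct, neg_zero]
    have e1 : c₁ 0 * y 0 + c₁ 1 * y 1 = 0 := by
      simpa [dotProduct, Fin.sum_univ_two] using hdot1
    have e2 : c₂ 0 * y 0 + c₂ 1 * y 1 = 0 := by
      simpa [dotProduct, Fin.sum_univ_two] using hdot2
    have hy0 : y 0 = 0 := by
      have h : (c₁ 0 * c₂ 1 - c₁ 1 * c₂ 0) * y 0 = 0 := by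
        linear_combination c₂ 1 * e1 - c₁ 1 * e2
      exact (mul_eq_zero.mp h).resolve_left hD
    have hy1 : y 1 = 0 := by
      have h : (c₁ 0 * c₂ 1 - c₁ 1 * c₂ 0) * y 1 = 0 := by
        linear_combination c₁ 0 * e2 - c₂ 0 * e1
      exact (mul_eq_zero.mp h).resolve_left hD
    have hyz : y = 0 := by
      funext i; fin_cases i
      · exact hy0
      · exact hy1
    have hk1 : B₁ *ᵥ w = 0 := hy ▸ hyz
    have hk2 : B₂ *ᵥ w = 0 := by
      have h := hadd
      rw [hyz, zero_add] at h
      exact h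
    refine ⟨w, hw0, ?_⟩
    intro B hB
    obtain ⟨s, t, rfl⟩ := hrepr B hB
    rw [add_mulVec, smul_mulVec, smul_mulVec, hk1, hk2,
      smul_zero, smul_zero, add_zero]
end

section
/- Let S be a 4×4 real symmetric matrix whose bilinear form vanishes on the 2-plane E spanned by v₁ = e₁ + a·e₃ and v₂ = e₂ + b·e₄ (a,b ∈ ℝ nonzero), i.e., vᵢᵀSvⱼ = 0 for i,j ∈ {1,2}. Then the space of such S lying in Q_C(λ₁,λ₂,λ₃) = {[[0,x₁,x₂,x₃],[x₁,0,λ₃x₃,λ₂x₂],[x₂,λ₃x₃,0,λ₁x₁],[x₃,λ₂x₂,λ₁x₁,0]] : x ∈ ℝ³} has dimension at most 2. -/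
open Matrix

/-- The general element of Bryant's Type C austere subspace, as a function
of the parameter vector x. -/
def SCmat (l1 l2 l3 : ℝ) (x : Fin 3 → ℝ) : Matrix (Fin 4) (Fin 4) ℝ :=
  !![0,   x 0,      x 1,      x 2;
     x 0, 0,        l3 * x 2, l2 * x 1;
     x 1, l3 * x 2, 0,        l1 * x 0;
     x 2, l2 * x 1, l1 * x 0, 0]

/-- SCmat as a linear map, so its range is the subspace Q_C. -/
def SCmap (l1 l2 l3 : ℝ) : (Fin 3 → ℝ) →ₗ[ℝ] Matrix (Fin 4) (Fin 4) ℝ where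
  toFun := SCmat l1 l2 l3
  map_add' x y := by
    ext i j
    fin_cases i <;> fin_cases j <;> simp [SCmat] <;> ring
  map_smul' c x := by
    ext i j
    fin_cases i <;> fin_cases j <;> simp [SCmat] <;> ring

/-- Evaluation of the bilinear form of a matrix at (v,w), as a linear map. -/
def phi (v w : Fin 4 → ℝ) : Matrix (Fin 4) (Fin 4) ℝ →ₗ[ℝ] ℝ where
  toFun S := v ⬝ᵥ S.mulVec w
  map_add' S T := by simp [Matrix.add_mulVec]
  map_smul' c S := by simp [Matrix.smul_mulVec]

/-- The subspace of Q_C whose bilinear form vanishes on the plane spanned by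
v₁ = e₁ + a·e₃ and v₂ = e₂ + b·e₄ has dimension at most 2 when a,b ≠ 0. -/
theorem stmt19 (l1 l2 l3 a b : ℝ) (ha : a ≠ 0) (hb : b ≠ 0) :
    Module.finrank ℝ
      ↥(LinearMap.range (SCmap l1 l2 l3)
        ⊓ LinearMap.ker (phi ![1,0,a,0] ![1,0,a,0])
        ⊓ LinearMap.ker (phi ![1,0,a,0] ![0,1,0,b])
        ⊓ LinearMap.ker (phi ![0,1,0,b] ![0,1,0,b])) ≤ 2 := by
  set f := SCmap l1 l2 l3 with hf
  set K : Submodule ℝ (Fin 3 → ℝ) :=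
    Submodule.span ℝ {Pi.single (0 : Fin 3) (1:ℝ), Pi.single (2 : Fin 3) (1:ℝ)} with hK
  have hle : (LinearMap.range f
        ⊓ LinearMap.ker (phi ![1,0,a,0] ![1,0,a,0])
        ⊓ LinearMap.ker (phi ![1,0,a,0] ![0,1,0,b])
        ⊓ LinearMap.ker (phi ![0,1,0,b] ![0,1,0,b])) ≤ K.map f := by
    rintro S ⟨⟨⟨⟨x, rfl⟩, h1⟩, -⟩, -⟩
    refine ⟨x, ?_, rfl⟩
    have : a * x 1 + a * x 1 = 0 := by
      have := h1
      simp only [LinearMap.mem_ker, phi, hf, SCmap, SCmat, LinearMap.coe_mk,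
        AddHom.coe_mk, Matrix.mulVec, dotProduct, Fin.sum_univ_four] at this
      simp at this
      linarith [this]
    have hx1 : x 1 = 0 := by
      have : (2 * a) * x 1 = 0 := by linarith
      rcases mul_eq_zero.mp this with h | h
      · exact absurd h (by simpa using (mul_ne_zero two_ne_zero ha))
      · exact h
    rw [hK]
    have hxeq : x = x 0 • (Pi.single 0 1 : Fin 3 → ℝ) + x 2 • (Pi.single 2 1 : Fin 3 → ℝ) := by
      funext i
      fin_cases i <;> simp [hx1]
    rw [hxeq]
    exact Submodule.add_mem _
      (Submodule.smul_mem _ _ (Submodule.subset_span (by simp)))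
      (Submodule.smul_mem _ _ (Submodule.subset_span (by simp)))
  have h1 : Module.finrank ℝ (K.map f) ≤ Module.finrank ℝ K :=
    Submodule.finrank_map_le f K
  have h2 : Module.finrank ℝ K ≤ 2 := by
    rw [hK]
    refine le_trans (finrank_span_le_card _) ?_
    have : ({Pi.single (0:Fin 3) (1:ℝ), Pi.single 2 1} : Set (Fin 3 → ℝ)).toFinset.card ≤ 2 := by
      rw [Set.toFinset_insert, Set.toFinset_singleton]
      exact le_trans (Finset.card_insert_le _ _) (by simp)
    exact this
  calc Module.finrank ℝ _ ≤ Module.finrank ℝ (K.map f) := Submodule.finrank_mono hle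
    _ ≤ 2 := le_trans h1 h2
end
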